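/- Let m, s, n be positive integers with n ≥ 3 and let r be a unit of Z_n with r^(ms) = ±1. If n is odd, then the graph CPMbar(m,s,n;r) is connected. -/

import Mathlib

/-- The graph `CPMbar(m,s,n;r)`: vertex set `Z_{ms} × (Z_n)^s`, where `⟨i;v⟩` is adjacent to
`⟨i+1; v ± r^i · e_ℓ⟩` with `ℓ ≡ i (mod s)`. -/
def cpmBar (m s n : ℕ) (r : ZMod n) :
    SimpleGraph (ZMod (m * s) × (ZMod s → ZMod n)) :=
  SimpleGraph.fromRel (fun x y => ∃ ε : ZMod n, (ε = 1 ∨ ε = -1) ∧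
    y.1 = x.1 + 1 ∧
    y.2 = x.2 + Pi.single (ZMod.castHom (dvd_mul_left s m) (ZMod s) x.1) (ε * r ^ x.1.val))

section Aux

variable {m s n : ℕ} {r : ZMod n}

private lemma cpm_adj_step (hn : 3 ≤ n) (hu : IsUnit r) (i : ZMod (m * s))
    (v : ZMod s → ZMod n) (ε : ZMod n) (hε : ε = 1 ∨ ε = -1) :
    (cpmBar m s n r).Adj (i, v)
      (i + 1, v + Pi.single (ZMod.castHom (dvd_mul_left s m) (ZMod s) i) (ε * r ^ i.val)) := by
  have : Fact (1 < n) := ⟨by omega⟩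
  rw [cpmBar, SimpleGraph.fromRel_adj]
  refine ⟨?_, Or.inl ⟨ε, hε, rfl, rfl⟩⟩
  intro h
  have h2 : v = v + Pi.single (ZMod.castHom (dvd_mul_left s m) (ZMod s) i) (ε * r ^ i.val) :=
    congrArg Prod.snd h
  have h3 : Pi.single (ZMod.castHom (dvd_mul_left s m) (ZMod s) i) (ε * r ^ i.val) = 0 :=
    (by rw [left_eq_add] at h2; exact h2)
  have h4 : ε * r ^ i.val = 0 := by
    have := congrFun h3 (ZMod.castHom (dvd_mul_left s m) (ZMod s) i)
    simpa using this
  have hεu : IsUnit ε := by rcases hε with h | h <;> simp [h]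
  exact (hεu.mul (hu.pow _)).ne_zero h4

private lemma cpm_reach_two (hn : 3 ≤ n) (hu : IsUnit r) (i : ZMod (m * s))
    (v : ZMod s → ZMod n) :
    (cpmBar m s n r).Reachable (i, v)
      (i, v + Pi.single (ZMod.castHom (dvd_mul_left s m) (ZMod s) i) (2 * r ^ i.val)) := by
  set ℓ := ZMod.castHom (dvd_mul_left s m) (ZMod s) i
  have e1 := cpm_adj_step (m := m) hn hu i v 1 (Or.inl rfl)
  have e2 := cpm_adj_step (m := m) hn hu i (v + Pi.single ℓ (2 * r ^ i.val)) (-1) (Or.inr rfl)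
  have hkey : v + Pi.single ℓ (2 * r ^ i.val) + Pi.single ℓ (-1 * r ^ i.val)
      = v + Pi.single ℓ (1 * r ^ i.val) := by
    rw [add_assoc, ← Pi.single_add]
    congr 1
    ring_nf
  rw [hkey] at e2
  exact e1.reachable.trans e2.symm.reachable

private lemma cpm_reach_mul (hn : 3 ≤ n) (hu : IsUnit r) (i : ZMod (m * s))
    (v : ZMod s → ZMod n) (k : ℕ) :
    (cpmBar m s n r).Reachable (i, v)
      (i, v + Pi.single (ZMod.castHom (dvd_mul_left s m) (ZMod s) i) (2 * r ^ i.val * k)) := by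
  set ℓ := ZMod.castHom (dvd_mul_left s m) (ZMod s) i
  induction k with
  | zero => simpa using SimpleGraph.Reachable.refl _
  | succ k ih =>
    refine ih.trans ?_
    have h := cpm_reach_two (m := m) hn hu i (v + Pi.single ℓ (2 * r ^ i.val * k))
    have hkey : v + Pi.single ℓ (2 * r ^ i.val * k) + Pi.single ℓ (2 * r ^ i.val)
        = v + Pi.single ℓ (2 * r ^ i.val * (k + 1 : ℕ)) := by
      rw [add_assoc, ← Pi.single_add]
      congr 1
      push_cast
      ring
    rw [hkey] at h
    exact h

private lemma cpm_reach_adjust (hn : 3 ≤ n) (hodd : Odd n) (hu : IsUnit r)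
    (i : ZMod (m * s)) (v : ZMod s → ZMod n) (c : ZMod n) :
    (cpmBar m s n r).Reachable (i, v)
      (i, v + Pi.single (ZMod.castHom (dvd_mul_left s m) (ZMod s) i) c) := by
  have : NeZero n := ⟨by omega⟩
  have h2 : IsUnit (2 : ZMod n) := by
    have : ((2 : ℕ) : ZMod n) = (2 : ZMod n) := by push_cast; ring
    rw [← this, ZMod.isUnit_iff_coprime]
    exact hodd.coprime_two_left
  have hu2 : IsUnit (2 * r ^ i.val) := h2.mul (hu.pow _)
  obtain ⟨u, huu⟩ := hu2
  have hc : c = 2 * r ^ i.val * ((((u⁻¹ : (ZMod n)ˣ) : ZMod n) * c).val : ℕ) := by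
    rw [ZMod.natCast_zmod_val, ← huu, ← mul_assoc]
    simp
  rw [hc]
  exact cpm_reach_mul hn hu i v _

private lemma cpm_reach_single (hn : 3 ≤ n) (hodd : Odd n) (hu : IsUnit r) (k : ℕ) :
    ∀ (i : ZMod (m * s)) (v : ZMod s → ZMod n) (ℓ : ZMod s) (c : ZMod n),
      ZMod.castHom (dvd_mul_left s m) (ZMod s) (i + k) = ℓ →
      (cpmBar m s n r).Reachable (i, v) (i, v + Pi.single ℓ c) := by
  induction k with
  | zero =>
    intro i v ℓ c hℓ
    simp only [Nat.cast_zero, add_zero] at hℓ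
    rw [← hℓ]
    exact cpm_reach_adjust hn hodd hu i v c
  | succ k ih =>
    intro i v ℓ c hℓ
    set δ : ZMod s → ZMod n := Pi.single (ZMod.castHom (dvd_mul_left s m) (ZMod s) i) (1 * r ^ i.val)
    have e1 := cpm_adj_step (m := m) hn hu i v 1 (Or.inl rfl)
    have hℓ' : ZMod.castHom (dvd_mul_left s m) (ZMod s) ((i + 1) + k) = ℓ := by
      rw [← hℓ]; congr 1; push_cast; ring
    have h2 := ih (i + 1) (v + δ) ℓ c hℓ'
    have e2 := cpm_adj_step (m := m) hn hu i (v + Pi.single ℓ c) 1 (Or.inl rfl)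
    have hkey : v + δ + Pi.single ℓ c = v + Pi.single ℓ c + δ := by abel
    rw [hkey] at h2
    exact (e1.reachable.trans h2).trans e2.symm.reachable

private lemma cpm_reach_single' (hs : 0 < s) (hn : 3 ≤ n) (hodd : Odd n) (hu : IsUnit r)
    (i : ZMod (m * s)) (v : ZMod s → ZMod n) (ℓ : ZMod s) (c : ZMod n) :
    (cpmBar m s n r).Reachable (i, v) (i, v + Pi.single ℓ c) := by
  have : NeZero s := ⟨hs.ne'⟩
  have hk : ZMod.castHom (dvd_mul_left s m) (ZMod s)
      (i + ((ℓ - ZMod.castHom (dvd_mul_left s m) (ZMod s) i).val : ℕ)) = ℓ := by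
    rw [map_add, map_natCast, ZMod.natCast_zmod_val]
    ring
  exact cpm_reach_single hn hodd hu _ i v ℓ c hk

private lemma cpm_reach_level (hs : 0 < s) (hn : 3 ≤ n) (hodd : Odd n) (hu : IsUnit r)
    (i : ZMod (m * s)) (v w : ZMod s → ZMod n) :
    (cpmBar m s n r).Reachable (i, v) (i, w) := by
  classical
  haveI : NeZero s := ⟨hs.ne'⟩
  haveI : Fintype (ZMod s) := ZMod.fintype s
  have key : ∀ S : Finset (ZMod s),
      (cpmBar m s n r).Reachable (i, v) (i, v + ∑ ℓ ∈ S, Pi.single ℓ ((w - v) ℓ)) := by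
    intro S
    induction S using Finset.induction with
    | empty => simpa using SimpleGraph.Reachable.refl _
    | insert a S' hx ih =>
      rw [Finset.sum_insert hx]
      refine ih.trans ?_
      have h := cpm_reach_single' hs hn hodd hu i
        (v + ∑ ℓ ∈ S', Pi.single ℓ ((w - v) ℓ)) a ((w - v) a)
      have hkey : v + ∑ ℓ ∈ S', Pi.single ℓ ((w - v) ℓ) + Pi.single a ((w - v) a)
          = v + (Pi.single a ((w - v) a) + ∑ ℓ ∈ S', Pi.single ℓ ((w - v) ℓ)) := by abel
      rw [hkey] at h
      exact h
  have h := key Finset.univ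
  rw [Finset.univ_sum_single (w - v)] at h
  simpa using h

private lemma cpm_reach_forward (hn : 3 ≤ n) (hu : IsUnit r) (k : ℕ) :
    ∀ (i : ZMod (m * s)) (v : ZMod s → ZMod n),
      ∃ w, (cpmBar m s n r).Reachable (i, v) (i + k, w) := by
  induction k with
  | zero => intro i v; exact ⟨v, by simpa using SimpleGraph.Reachable.refl _⟩
  | succ k ih =>
    intro i v
    have e1 := cpm_adj_step (m := m) hn hu i v 1 (Or.inl rfl)
    obtain ⟨w, hw⟩ := ih (i + 1)
      (v + Pi.single (ZMod.castHom (dvd_mul_left s m) (ZMod s) i) (1 * r ^ i.val))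
    refine ⟨w, e1.reachable.trans (hw.trans ?_)⟩
    have : (i + 1) + (k : ZMod (m * s)) = i + ((k : ℕ) + 1 : ℕ) := by push_cast; ring
    rw [this]

end Aux

/-- if n is odd then CPMbar(m,s,n;r) is connected. -/
theorem stmt17 (m s n : ℕ) (hm : 0 < m) (hs : 0 < s) (hn : 3 ≤ n) (hodd : Odd n)
    (r : ZMod n) (hu : IsUnit r) (hr : r ^ (m * s) = 1 ∨ r ^ (m * s) = -1) :
    (cpmBar m s n r).Connected := by
  have : NeZero (m * s) := ⟨(Nat.mul_pos hm hs).ne'⟩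
  rw [SimpleGraph.connected_iff]
  refine ⟨?_, ⟨(0, 0)⟩⟩
  rintro ⟨i, v⟩ ⟨j, w⟩
  obtain ⟨w', hw'⟩ := cpm_reach_forward (r := r) hn hu (j - i).val i v
  rw [ZMod.natCast_zmod_val, add_sub_cancel] at hw'
  exact hw'.trans (cpm_reach_level hs hn hodd hu j w' w)
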